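/- Let G be a finite simple graph that contains no induced subgraph isomorphic to a subdivision of K_4. Then no vertex of G can be linked to a hole of G. That is, there do not exist a hole C of G, a vertex v not in C, and three induced paths P_1, P_2, P_3 such that: the union of the interiors of P_1, P_2, P_3 together with v is disjoint from C; each P_i has one end v and the other end in C, with no other edges between P_i and C; for distinct i, j the paths P_i and P_j share only the vertex v; whenever a vertex of P_i is adjacent to a vertex of P_j (i ≠ j), either one of them is v or both lie in C; and every neighbor of v in C lies on some P_i. -/

import Mathlib

open SimpleGraph

/-- `G` contains a subdivision of `K₄` as a (not necessarily induced) subgraph: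
there are four branch vertices joined by six pairwise internally disjoint paths. -/
def HasK4Subdivision {V : Type*} (G : SimpleGraph V) : Prop :=
  ∃ b : Fin 4 → V, Function.Injective b ∧
    ∃ P : ∀ i j : Fin 4, i < j → G.Walk (b i) (b j),
      (∀ (i j : Fin 4) (hij : i < j), (P i j hij).IsPath) ∧
      (∀ (i j : Fin 4) (hij : i < j) (k l : Fin 4) (hkl : k < l), (i, j) ≠ (k, l) → ∀ w,
        w ∈ (P i j hij).support → w ∈ (P k l hkl).support →
          (w = b i ∨ w = b j) ∧ (w = b k ∨ w = b l))

/-- A graph is series-parallel if it contains no subdivision of `K₄` as a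
(not necessarily induced) subgraph. -/
def SeriesParallel {V : Type*} (G : SimpleGraph V) : Prop := ¬ HasK4Subdivision G

/-- `G` has an induced subgraph isomorphic to a subdivision of `K₄`: four branch
vertices joined by six pairwise internally disjoint paths, such that every edge of `G`
between vertices of the union of the paths is an edge of one of the paths. -/
def HasInducedK4Subdivision {V : Type*} (G : SimpleGraph V) : Prop :=
  ∃ b : Fin 4 → V, Function.Injective b ∧
    ∃ P : ∀ i j : Fin 4, i < j → G.Walk (b i) (b j),
      (∀ (i j : Fin 4) (hij : i < j), (P i j hij).IsPath) ∧
      (∀ (i j : Fin 4) (hij : i < j) (k l : Fin 4) (hkl : k < l), (i, j) ≠ (k, l) → ∀ w,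
        w ∈ (P i j hij).support → w ∈ (P k l hkl).support →
          (w = b i ∨ w = b j) ∧ (w = b k ∨ w = b l)) ∧
      (∀ a c : V, (∃ (i j : Fin 4) (hij : i < j), a ∈ (P i j hij).support) →
        (∃ (i j : Fin 4) (hij : i < j), c ∈ (P i j hij).support) → G.Adj a c →
          ∃ (i j : Fin 4) (hij : i < j), s(a, c) ∈ (P i j hij).edges)

/-- `G` is ISK4-free: no induced subgraph of `G` is a subdivision of `K₄`. -/
def ISK4Free {V : Type*} (G : SimpleGraph V) : Prop := ¬ HasInducedK4Subdivision G

/-- `G` is triangle-free. -/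
def TriangleFree {V : Type*} (G : SimpleGraph V) : Prop := G.CliqueFree 3

/-- `G` has no induced subgraph isomorphic to `K₃,₃`. -/
def K33Free {V : Type*} (G : SimpleGraph V) : Prop :=
  ¬ ∃ a b : Fin 3 → V, Function.Injective a ∧ Function.Injective b ∧
    (∀ i j, a i ≠ b j) ∧ (∀ i j, G.Adj (a i) (b j)) ∧
    (∀ i j, ¬ G.Adj (a i) (a j)) ∧ (∀ i j, ¬ G.Adj (b i) (b j))

/-- `C` is the vertex set of an induced cycle of `G`: the induced subgraph on `C` is
connected and every vertex of `C` has exactly two neighbors in `C`. -/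
def IsInducedCycle {V : Type*} (G : SimpleGraph V) (C : Set V) : Prop :=
  C.Finite ∧ 3 ≤ C.ncard ∧ (G.induce C).Connected ∧
    ∀ v ∈ C, (G.neighborSet v ∩ C).ncard = 2

/-- A hole is an induced cycle of length at least 4. -/
def IsHole {V : Type*} (G : SimpleGraph V) (C : Set V) : Prop :=
  IsInducedCycle G C ∧ 4 ≤ C.ncard

/-- `(C, x)` is a wheel: `C` is a hole and `x` has at least three neighbors in `C`. -/
def IsWheel {V : Type*} (G : SimpleGraph V) (C : Set V) (x : V) : Prop :=
  IsHole G C ∧ x ∉ C ∧ 3 ≤ (G.neighborSet x ∩ C).ncard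

/-- The number of spokes of the wheel `(C, x)`. -/
noncomputable def numSpokes {V : Type*} (G : SimpleGraph V) (C : Set V) (x : V) : ℕ :=
  (G.neighborSet x ∩ C).ncard

/-- `S` is (the vertex set of) a sector of the wheel `(C, x)`: a maximal path of the
hole `C` containing no spoke (neighbor of `x`) in its interior.  Here this is rendered
as: `S` is maximal among the subsets of `C` inducing a connected subgraph in which no
vertex with two neighbors inside the subset is a neighbor of `x`. -/
def IsSector {V : Type*} (G : SimpleGraph V) (C : Set V) (x : V) (S : Set V) : Prop :=
  S ⊆ C ∧ (G.induce S).Connected ∧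
  (∀ v ∈ S, (G.neighborSet v ∩ S).ncard = 2 → ¬ G.Adj x v) ∧
  (∀ T, S ⊆ T → T ⊆ C → (G.induce T).Connected →
    (∀ v ∈ T, (G.neighborSet v ∩ T).ncard = 2 → ¬ G.Adj x v) → T = S)

/-- The interior of a sector of a wheel with center `x`: the sector minus its two
ends (which are spokes, i.e. neighbors of `x`). -/
def sectorInterior {V : Type*} (G : SimpleGraph V) (x : V) (S : Set V) : Set V :=
  S \ G.neighborSet x

/-- The wheel `(C, x)` is a proper wheel in `G`. -/
def IsProperWheel {V : Type*} (G : SimpleGraph V) (C : Set V) (x : V) : Prop :=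
  IsWheel G C x ∧ ∀ v, v ∉ C → v ≠ x →
    (∃ S, IsSector G C x S ∧ G.neighborSet v ∩ C ⊆ S) ∧
    (3 ≤ (G.neighborSet v ∩ C).ncard → G.Adj v x)

/-- The wheel `(C, x)` is a proper wheel in the subgraph of `G` induced by `A`. -/
def IsProperWheelOn {V : Type*} (G : SimpleGraph V) (A : Set V) (C : Set V) (x : V) : Prop :=
  C ⊆ A ∧ x ∈ A ∧ IsWheel G C x ∧
  ∀ v ∈ A, v ∉ C → v ≠ x →
    (∃ S, IsSector G C x S ∧ G.neighborSet v ∩ C ⊆ S) ∧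
    (3 ≤ (G.neighborSet v ∩ C).ncard → G.Adj v x)

/-- `p` is an induced path in `G`. -/
def IsInducedPath {V : Type*} {u w : V} (G : SimpleGraph V) (p : G.Walk u w) : Prop :=
  p.IsPath ∧ ∀ a ∈ p.support, ∀ b ∈ p.support, G.Adj a b → s(a, b) ∈ p.edges

/-- `K` is (the vertex set of) a connected component of the subgraph of `G` induced
by `A`. -/
def IsCompOf {V : Type*} (G : SimpleGraph V) (A : Set V) (K : Set V) : Prop :=
  K ⊆ A ∧ (G.induce K).Connected ∧ ∀ a ∈ K, ∀ b ∈ A, G.Adj a b → b ∈ K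

/-- `x` is a non-offensive vertex for the wheel `(C, v)`. -/
def NonOffensive {V : Type*} (G : SimpleGraph V) (C : Set V) (v x : V) : Prop :=
  ∃ S1 S2 : Set V, IsSector G C v S1 ∧ IsSector G C v S2 ∧ S1 ≠ S2 ∧
    (S1 ∩ S2).Nonempty ∧ G.Adj x v ∧
    (G.neighborSet x ∩ S1).Nonempty ∧ (G.neighborSet x ∩ S2).Nonempty ∧
    G.neighborSet x ∩ C ⊆ S1 ∪ S2 ∧
    ∀ u, u ∉ C → u ≠ v → G.Adj u x → G.neighborSet u ∩ C ⊆ S1 ∪ S2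

/-- `x` is an `a`-non-offensive vertex for the wheel `(C, v)`: it is non-offensive,
witnessed by two consecutive sectors meeting exactly in `{a}`. -/
def ANonOffensive {V : Type*} (G : SimpleGraph V) (C : Set V) (v a x : V) : Prop :=
  ∃ S1 S2 : Set V, IsSector G C v S1 ∧ IsSector G C v S2 ∧ S1 ≠ S2 ∧
    S1 ∩ S2 = {a} ∧ G.Adj x v ∧
    (G.neighborSet x ∩ S1).Nonempty ∧ (G.neighborSet x ∩ S2).Nonempty ∧
    G.neighborSet x ∩ C ⊆ S1 ∪ S2 ∧
    ∀ u, u ∉ C → u ≠ v → G.Adj u x → G.neighborSet u ∩ C ⊆ S1 ∪ S2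

/-- The wheel `(C, v)` is `k`-almost proper, witnessed by the spokes `xs 0, …, xs (k-1)`
(no two of which lie in a common sector) and the set `X` of vertices outside the wheel:
the wheel is proper in `G \ X`, and every member of `X` is `xs i`-non-offensive for
some `i`. -/
def IsAlmostProperWheel {V : Type*} (G : SimpleGraph V) (C : Set V) (v : V) (k : ℕ)
    (xs : Fin k → V) (X : Set V) : Prop :=
  IsWheel G C v ∧
  (∀ i, xs i ∈ G.neighborSet v ∩ C) ∧
  (∀ i j, i ≠ j → ¬ ∃ S, IsSector G C v S ∧ xs i ∈ S ∧ xs j ∈ S) ∧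
  (∀ x ∈ X, x ∉ C ∧ x ≠ v) ∧
  (∀ u, u ∉ C → u ≠ v → u ∉ X →
    (∃ S, IsSector G C v S ∧ G.neighborSet u ∩ C ⊆ S) ∧
    (3 ≤ (G.neighborSet u ∩ C).ncard → G.Adj u v)) ∧
  (∀ x ∈ X, ∃ i, ANonOffensive G C v (xs i) x)

/-- The induced subgraph on `S` is a subdivision of `K₁,₃` with `a`, `b`, `c` as its
vertices of degree one (equivalently, a tree whose set of leaves is exactly `{a, b, c}`). -/
def IsK13SubdivisionWithLeaves {V : Type*} (G : SimpleGraph V) (S : Set V) (a b c : V) : Prop :=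
  a ∈ S ∧ b ∈ S ∧ c ∈ S ∧ a ≠ b ∧ a ≠ c ∧ b ≠ c ∧
  (G.induce S).Connected ∧ (G.induce S).IsAcyclic ∧
  ∀ v ∈ S, ((G.neighborSet v ∩ S).ncard = 1 ↔ v = a ∨ v = b ∨ v = c)

/-- Adjacency relation of the graph obtained from `G` by contracting the set `K`
to the single new vertex `none`. -/
def contractAdj {V : Type*} (G : SimpleGraph V) (K : Set V) :
    Option {v : V // v ∉ K} → Option {v : V // v ∉ K} → Prop
  | some a, some b => G.Adj a.1 b.1
  | some a, none => ∃ k ∈ K, G.Adj a.1 k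
  | none, some b => ∃ k ∈ K, G.Adj k b.1
  | none, none => False

/-- The graph obtained from `G` by contracting `K` to the single new vertex `none`
(deleting arising loops and parallel edges). -/
def contractSet {V : Type*} (G : SimpleGraph V) (K : Set V) :
    SimpleGraph (Option {v : V // v ∉ K}) where
  Adj := contractAdj G K
  symm := by
    constructor
    intro a b h
    match a, b, h with
    | none, none, h => exact False.elim h
    | none, some b, ⟨k, hk, ha⟩ => exact ⟨k, hk, ha.symm⟩
    | some a, none, ⟨k, hk, ha⟩ => exact ⟨k, hk, ha.symm⟩
    | some a, some b, h => exact G.symm.symm _ _ h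
  loopless := by
    constructor
    rintro (_ | a) h
    · exact False.elim h
    · exact G.loopless.irrefl a.1 h


section AuxLemmasForNoVertexLinked
open Walk
variable {W : Type*} {H : SimpleGraph W}



/-- In a path starting at `x`, there is at most one edge at `x`. -/
lemma path_first_edge {x y a b : W} (p : H.Walk x y) (hp : p.IsPath)
    (ha : s(x, a) ∈ p.edges) (hb : s(x, b) ∈ p.edges) : a = b := by
  cases p with
  | nil => simp at ha
  | cons h q =>
    rename_i b'
    rw [cons_isPath_iff] at hp
    have key : ∀ c : W, s(x, c) ∈ (Walk.cons h q).edges → c = b' := by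
      intro c hc
      rw [edges_cons, List.mem_cons] at hc
      rcases hc with hc | hc
      · rw [Sym2.eq_iff] at hc
        rcases hc with ⟨-, rfl⟩ | ⟨rfl, rfl⟩
        · rfl
        · exact absurd h (H.loopless.irrefl _)
      · exact absurd (Walk.fst_mem_support_of_mem_edges q hc) hp.2
    rw [key a ha, key b hb]

lemma walk_end_mem_tail {x y : W} (p : H.Walk x y) (hxy : x ≠ y) : y ∈ p.support.tail := by
  cases p with
  | nil => exact absurd rfl hxy
  | cons h q => simpa using q.end_mem_support

lemma closed_walk_mem_tail {x u : W} (w : H.Walk x x) (hnil : ¬ w.Nil) (hu : u ∈ w.support) :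
    u ∈ w.support.tail := by
  cases w with
  | nil => simp at hnil
  | cons h q =>
    rw [support_cons, List.mem_cons] at hu
    rcases hu with rfl | hu
    · simpa using q.end_mem_support
    · simpa using hu

/-- A cycle has two distinct edges at its basepoint. -/
lemma cycle_two_edges_at_start {u : W} (w : H.Walk u u) (hw : w.IsCycle) :
    ∃ a b : W, a ≠ b ∧ s(u, a) ∈ w.edges ∧ s(u, b) ∈ w.edges := by
  cases w with
  | nil => exact absurd hw (Walk.IsCycle.not_of_nil)
  | cons h q =>
    rename_i a
    -- first edge
    have ha : s(u, a) ∈ (Walk.cons h q).edges := by simp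
    -- last edge, via reverse
    have hrev : (Walk.cons h q).reverse.edges = (Walk.cons h q).edges.reverse :=
      Walk.edges_reverse _
    have hqnil : q.edges ≠ [] := by
      cases q with
      | nil => exact absurd h (H.loopless.irrefl _)
      | cons h' q' => simp
    cases hrw : (Walk.cons h q).reverse with
    | nil =>
      have : (Walk.cons h q).reverse.length = 0 := by rw [hrw]; rfl
      rw [Walk.length_reverse] at this
      simp at this
    | cons h' r =>
      rename_i b
      have hb : s(u, b) ∈ (Walk.cons h q).edges := by
        have : s(u, b) ∈ (Walk.cons h q).reverse.edges := by rw [hrw]; simp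
        rw [hrev, List.mem_reverse] at this
        exact this
      refine ⟨a, b, ?_, ha, hb⟩
      rintro rfl
      -- then the first edge equals the last edge of the trail
      have hlast : (Walk.cons h q).edges.reverse = s(u, a) :: r.edges := by
        rw [← hrev, hrw]; simp
      have : (Walk.cons h q).edges = r.edges.reverse ++ [s(u, a)] := by
        have := congrArg List.reverse hlast
        simpa using this
      have hmem : s(u, a) ∈ q.edges := by
        have h2 : s(u, a) :: q.edges = r.edges.reverse ++ [s(u, a)] := by
          rw [← this]; simp
        rcases hre : r.edges.reverse with _ | ⟨e, t⟩
        · rw [hre] at h2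
          simp only [List.nil_append, List.cons.injEq] at h2
          exact absurd h2.2 hqnil
        · rw [hre, List.cons_append, List.cons.injEq] at h2
          rw [h2.2]; simp
      have htrail := hw.isCircuit.isTrail
      rw [Walk.isTrail_def, Walk.edges_cons, List.nodup_cons] at htrail
      exact htrail.1 hmem

/-- Walking from inside a set to outside, some edge crosses. -/
lemma exists_crossing_edge {S : Set W} :
    ∀ {a b : W} (_ : H.Walk a b), a ∈ S → b ∉ S →
      ∃ p q : W, H.Adj p q ∧ p ∈ S ∧ q ∉ S := by
  intro a b t
  induction t with
  | nil => intro ha hb; exact absurd ha hb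
  | @cons a' x b' h t ih =>
    intro ha hb
    by_cases hx : x ∈ S
    · exact ih hx hb
    · exact ⟨a', x, h, ha, hx⟩

/-- In a graph where the basepoint has exactly 2 neighbors, every edge at a support vertex
of a cycle is a cycle edge. -/
lemma cycle_edge_of_adj {z : W} (w : H.Walk z z) (hw : w.IsCycle)
    (u : W) (hu : u ∈ w.support)
    (hdeg : (H.neighborSet u).ncard = 2) (hfin : (H.neighborSet u).Finite)
    {y : W} (hadj : H.Adj u y) : s(u, y) ∈ w.edges := by
  classical
  have hrot := hw.rotate hu
  obtain ⟨a, b, hab, ha, hb⟩ := cycle_two_edges_at_start (w.rotate u hu) hrot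
  have haN : a ∈ H.neighborSet u := (w.rotate u hu).adj_of_mem_edges ha
  have hbN : b ∈ H.neighborSet u := (w.rotate u hu).adj_of_mem_edges hb
  have hsub : {a, b} ⊆ H.neighborSet u := by
    rintro c (rfl | rfl); exacts [haN, hbN]
  have hcard : ({a, b} : Set W).ncard = 2 := Set.ncard_pair hab
  have heq : H.neighborSet u = {a, b} :=
    (Set.eq_of_subset_of_ncard_le hsub (by rw [hcard, hdeg]) hfin).symm
  have hy : y ∈ ({a, b} : Set W) := heq ▸ hadj
  have hmem : s(u, y) ∈ (w.rotate u hu).edges := by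
    rcases hy with rfl | rfl; exacts [ha, hb]
  exact (w.rotate_edges u hu).mem_iff.mp hmem

/-- A connected graph in which every vertex has exactly two neighbors has a spanning cycle. -/
lemma exists_spanning_cycle [Fintype W] [Nonempty W] (hc : H.Connected)
    (hdeg : ∀ x : W, (H.neighborSet x).ncard = 2) :
    ∃ (z : W) (w : H.Walk z z), w.IsCycle ∧ ∀ u : W, u ∈ w.support := by
  classical
  -- first, find a path all of whose start-neighbors lie on it
  have key : ∀ (n : ℕ) (x y : W) (p : H.Walk x y), p.IsPath →
      Fintype.card W - p.length ≤ n →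
      ∃ (x' y' : W) (p' : H.Walk x' y'), p'.IsPath ∧ ∀ z, H.Adj x' z → z ∈ p'.support := by
    intro n
    induction n with
    | zero =>
      intro x y p hp hn
      exact absurd hp.length_lt (by omega)
    | succ n ih =>
      intro x y p hp hn
      by_cases hall : ∀ z, H.Adj x z → z ∈ p.support
      · exact ⟨x, y, p, hp, hall⟩
      · push_neg at hall
        obtain ⟨z, hzx, hzp⟩ := hall
        have hp' : (Walk.cons hzx.symm p).IsPath := by
          rw [cons_isPath_iff]; exact ⟨hp, hzp⟩
        exact ih z y (Walk.cons hzx.symm p) hp' (by simp [Walk.length_cons]; omega)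
  obtain ⟨x, y, p, hp, hall⟩ := by
    have x0 := Classical.arbitrary W
    exact key (Fintype.card W) x0 x0 Walk.nil (by simp) (by omega)
  -- x has two neighbors, both on p
  obtain ⟨a, b, hab, hNab⟩ := Set.ncard_eq_two.mp (hdeg x)
  have haadj : H.Adj x a := by rw [← SimpleGraph.mem_neighborSet, hNab]; simp
  have hbadj : H.Adj x b := by rw [← SimpleGraph.mem_neighborSet, hNab]; simp
  -- one of a, b gives an edge not on p
  have hone : ∃ z, H.Adj x z ∧ s(x, z) ∉ p.edges := by
    by_contra hcon
    push_neg at hcon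
    exact hab (path_first_edge p hp (hcon a haadj) (hcon b hbadj))
  obtain ⟨z, hzadj, hzne⟩ := hone
  have hzp : z ∈ p.support := hall z hzadj
  set t := p.takeUntil z hzp with ht
  have htp : t.IsPath := hp.takeUntil hzp
  have hcyc : (Walk.cons hzadj t.reverse).IsCycle := by
    rw [Walk.cons_isCycle_iff]
    refine ⟨htp.reverse, ?_⟩
    rw [Walk.edges_reverse, List.mem_reverse]
    exact fun hmem => hzne (Walk.edges_takeUntil_subset _ _ hmem)
  refine ⟨x, Walk.cons hzadj t.reverse, hcyc, ?_⟩
  -- spanning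
  by_contra hcon
  push_neg at hcon
  obtain ⟨u, hu⟩ := hcon
  obtain ⟨pq⟩ := hc.preconnected x u
  obtain ⟨p', q', hadj', hp', hq'⟩ :=
    exists_crossing_edge (S := {v | v ∈ (Walk.cons hzadj t.reverse).support}) pq
      (by simp) hu
  have := cycle_edge_of_adj _ hcyc p' hp' (hdeg p') (Set.toFinite _) hadj'
  exact hq' (Walk.snd_mem_support_of_mem_edges _ this)

/-- Splitting a cycle through three marked vertices into three arcs. -/
lemma cycle_three_split {x u w : W} (B1 : H.Walk x u) (B2 : H.Walk u w) (B3 : H.Walk w x)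
    (hq : (B1.append (B2.append B3)).IsCycle)
    (hxu : x ≠ u) (hxw : x ≠ w) (huw : u ≠ w) :
    B1.IsPath ∧ B2.IsPath ∧ B3.IsPath ∧
    (∀ v, v ∈ B1.support → v ∈ B2.support → v = u) ∧
    (∀ v, v ∈ B2.support → v ∈ B3.support → v = w) ∧
    (∀ v, v ∈ B1.support → v ∈ B3.support → v = x) ∧
    w ∉ B1.support ∧ x ∉ B2.support ∧ u ∉ B3.support := by
  have hT : (B1.append (B2.append B3)).support.tail
      = B1.support.tail ++ (B2.support.tail ++ B3.support.tail) := by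
    rw [Walk.tail_support_append, Walk.tail_support_append]
  have hnd : (B1.support.tail ++ (B2.support.tail ++ B3.support.tail)).Nodup := by
    rw [← hT]; exact hq.2
  rw [List.nodup_append, List.nodup_append] at hnd
  obtain ⟨h1, ⟨h2, h3, d23⟩, d123⟩ := hnd
  have d12 : ∀ v, v ∈ B1.support.tail → v ∈ B2.support.tail → False :=
    fun v hv1 hv2 => d123 v hv1 v (List.mem_append_left _ hv2) rfl
  have d13 : ∀ v, v ∈ B1.support.tail → v ∈ B3.support.tail → False :=
    fun v hv1 hv2 => d123 v hv1 v (List.mem_append_right _ hv2) rfl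
  have d23' : ∀ v, v ∈ B2.support.tail → v ∈ B3.support.tail → False :=
    fun v hv1 hv2 => d23 v hv1 v hv2 rfl
  -- memberships of marked vertices
  have hu1 : u ∈ B1.support.tail := walk_end_mem_tail B1 hxu
  have hw2 : w ∈ B2.support.tail := walk_end_mem_tail B2 huw
  have hx3 : x ∈ B3.support.tail := walk_end_mem_tail B3 (Ne.symm hxw)
  have hs1 : B1.support = x :: B1.support.tail := B1.support_eq_cons
  have hs2 : B2.support = u :: B2.support.tail := B2.support_eq_cons
  have hs3 : B3.support = w :: B3.support.tail := B3.support_eq_cons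
  have m1 : ∀ v, v ∈ B1.support → v = x ∨ v ∈ B1.support.tail := by
    intro v hv; rw [hs1] at hv; exact List.mem_cons.mp hv
  have m2 : ∀ v, v ∈ B2.support → v = u ∨ v ∈ B2.support.tail := by
    intro v hv; rw [hs2] at hv; exact List.mem_cons.mp hv
  have m3 : ∀ v, v ∈ B3.support → v = w ∨ v ∈ B3.support.tail := by
    intro v hv; rw [hs3] at hv; exact List.mem_cons.mp hv
  refine ⟨?_, ?_, ?_, ?_, ?_, ?_, ?_, ?_, ?_⟩
  · rw [Walk.isPath_def, hs1, List.nodup_cons]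
    exact ⟨fun hx1 => d13 x hx1 hx3, h1⟩
  · rw [Walk.isPath_def, hs2, List.nodup_cons]
    exact ⟨fun hu2 => d12 u hu1 hu2, h2⟩
  · rw [Walk.isPath_def, hs3, List.nodup_cons]
    exact ⟨fun hw3 => d23' w hw2 hw3, h3⟩
  · intro v hv1 hv2
    rcases m2 v hv2 with heq2 | hv2t
    · exact heq2
    · rcases m1 v hv1 with heq | hv1t
      · exact (d23' x (by rwa [heq] at hv2t) hx3).elim
      · exact (d12 v hv1t hv2t).elim
  · intro v hv2 hv3
    rcases m3 v hv3 with heq3 | hv3t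
    · exact heq3
    · rcases m2 v hv2 with heq | hv2t
      · exact (d13 u hu1 (by rwa [heq] at hv3t)).elim
      · exact (d23' v hv2t hv3t).elim
  · intro v hv1 hv3
    rcases m1 v hv1 with heq | hv1t
    · exact heq
    · rcases m3 v hv3 with heq3 | hv3t
      · exact (d12 w (by rwa [heq3] at hv1t) hw2).elim
      · exact (d13 v hv1t hv3t).elim
  · intro hw1
    rcases m1 w hw1 with h | hw1t
    · exact hxw h.symm
    · exact d12 w hw1t hw2
  · intro hx2
    rcases m2 x hx2 with h | hx2t
    · exact hxu h
    · exact d23' x hx2t hx3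
  · intro hu3
    rcases m3 u hu3 with h | hu3t
    · exact huw h
    · exact d13 u hu1 hu3t

end AuxLemmasForNoVertexLinked

section AuxBuildForNoVertexLinked
variable {V : Type*} {G : SimpleGraph V}

def mkB (v a b c : V) : Fin 4 → V := fun i =>
  match i with
  | ⟨0,_⟩ => v
  | ⟨1,_⟩ => a
  | ⟨2,_⟩ => b
  | ⟨3,_⟩ => c

def mk6 {b : Fin 4 → V}
    (p01 : G.Walk (b 0) (b 1)) (p02 : G.Walk (b 0) (b 2)) (p03 : G.Walk (b 0) (b 3))
    (p12 : G.Walk (b 1) (b 2)) (p13 : G.Walk (b 1) (b 3)) (p23 : G.Walk (b 2) (b 3)) :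
    ∀ i j : Fin 4, i < j → G.Walk (b i) (b j) := fun i j hij =>
  match i, j, hij with
  | ⟨0,_⟩, ⟨1,_⟩, _ => p01
  | ⟨0,_⟩, ⟨2,_⟩, _ => p02
  | ⟨0,_⟩, ⟨3,_⟩, _ => p03
  | ⟨1,_⟩, ⟨2,_⟩, _ => p12
  | ⟨1,_⟩, ⟨3,_⟩, _ => p13
  | ⟨2,_⟩, ⟨3,_⟩, _ => p23
  | ⟨0,_⟩, ⟨0,_⟩, hij => absurd hij (by rw [Fin.mk_lt_mk]; omega)
  | ⟨1,_⟩, ⟨0,_⟩, hij => absurd hij (by rw [Fin.mk_lt_mk]; omega)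
  | ⟨1,_⟩, ⟨1,_⟩, hij => absurd hij (by rw [Fin.mk_lt_mk]; omega)
  | ⟨2,_⟩, ⟨0,_⟩, hij => absurd hij (by rw [Fin.mk_lt_mk]; omega)
  | ⟨2,_⟩, ⟨1,_⟩, hij => absurd hij (by rw [Fin.mk_lt_mk]; omega)
  | ⟨2,_⟩, ⟨2,_⟩, hij => absurd hij (by rw [Fin.mk_lt_mk]; omega)
  | ⟨3,_⟩, ⟨0,_⟩, hij => absurd hij (by rw [Fin.mk_lt_mk]; omega)
  | ⟨3,_⟩, ⟨1,_⟩, hij => absurd hij (by rw [Fin.mk_lt_mk]; omega)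
  | ⟨3,_⟩, ⟨2,_⟩, hij => absurd hij (by rw [Fin.mk_lt_mk]; omega)
  | ⟨3,_⟩, ⟨3,_⟩, hij => absurd hij (by rw [Fin.mk_lt_mk]; omega)

example (v a b c : V) : mkB v a b c 2 = b := rfl
example {b : Fin 4 → V} (p01 : G.Walk (b 0) (b 1)) (p02 : G.Walk (b 0) (b 2)) (p03 : G.Walk (b 0) (b 3))
    (p12 : G.Walk (b 1) (b 2)) (p13 : G.Walk (b 1) (b 3)) (p23 : G.Walk (b 2) (b 3)) (h : (1:Fin 4) < 3) :
    mk6 p01 p02 p03 p12 p13 p23 1 3 h = p13 := rfl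
example {b : Fin 4 → V} (p01 : G.Walk (b 0) (b 1)) (p02 : G.Walk (b 0) (b 2)) (p03 : G.Walk (b 0) (b 3))
    (p12 : G.Walk (b 1) (b 2)) (p13 : G.Walk (b 1) (b 3)) (p23 : G.Walk (b 2) (b 3)) (h : (2:Fin 4) < 3)
    (w : V) (hw : w ∈ (mk6 p01 p02 p03 p12 p13 p23 2 3 h).support) : w ∈ p23.support := hw

section Build
variable {V : Type*} (G : SimpleGraph V)

lemma build_ISK4 (C : Set V) (v : V) (c : Fin 3 → V)
    (P : ∀ i : Fin 3, G.Walk v (c i))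
    (Q1 : G.Walk (c 0) (c 1)) (Q2 : G.Walk (c 1) (c 2)) (Q3 : G.Walk (c 2) (c 0))
    (hvC : v ∉ C) (hcC : ∀ i, c i ∈ C) (hcInj : Function.Injective c)
    (hInd : ∀ i, IsInducedPath G (P i))
    (hPC : ∀ i w, w ∈ (P i).support → w ∈ C → w = c i)
    (hNoEdge : ∀ i, ∀ w ∈ (P i).support, w ∉ C → ∀ u ∈ C, G.Adj w u →
      ∃ j, s(w, u) ∈ (P j).edges)
    (hShare : ∀ i j : Fin 3, i ≠ j → ∀ w, w ∈ (P i).support → w ∈ (P j).support → w = v)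
    (hCross : ∀ i j : Fin 3, i ≠ j → ∀ a ∈ (P i).support, ∀ b ∈ (P j).support,
      G.Adj a b → a = v ∨ b = v ∨ (a ∈ C ∧ b ∈ C))
    (hQ1p : Q1.IsPath) (hQ2p : Q2.IsPath) (hQ3p : Q3.IsPath)
    (hQ1C : ∀ w ∈ Q1.support, w ∈ C) (hQ2C : ∀ w ∈ Q2.support, w ∈ C)
    (hQ3C : ∀ w ∈ Q3.support, w ∈ C)
    (hQ12 : ∀ w, w ∈ Q1.support → w ∈ Q2.support → w = c 1)
    (hQ23 : ∀ w, w ∈ Q2.support → w ∈ Q3.support → w = c 2)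
    (hQ13 : ∀ w, w ∈ Q1.support → w ∈ Q3.support → w = c 0)
    (hc2Q1 : c 2 ∉ Q1.support) (hc0Q2 : c 0 ∉ Q2.support) (hc1Q3 : c 1 ∉ Q3.support)
    (hCedge : ∀ a b, a ∈ C → b ∈ C → G.Adj a b →
      s(a, b) ∈ Q1.edges ∨ s(a, b) ∈ Q2.edges ∨ s(a, b) ∈ Q3.edges) :
    HasInducedK4Subdivision G := by
  have hvc : ∀ i, v ≠ c i := fun i h => hvC (h ▸ hcC i)
  have hcc : ∀ i j : Fin 3, i ≠ j → c i ≠ c j := fun i j hij h => hij (hcInj h)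
  have hmem3 : ∀ x, x ∈ Q3.reverse.support → x ∈ Q3.support := fun x hx => by
    rwa [Walk.support_reverse, List.mem_reverse] at hx
  have hedge3 : ∀ e, e ∈ Q3.edges → e ∈ Q3.reverse.edges := fun e he => by
    rwa [Walk.edges_reverse, List.mem_reverse]
  have HP1 : ∀ (a : Fin 3) w, w ∈ (P a).support → w ∈ Q1.support → w = c a :=
    fun a w h1 h2 => hPC a w h1 (hQ1C w h2)
  have HP2 : ∀ (a : Fin 3) w, w ∈ (P a).support → w ∈ Q2.support → w = c a :=
    fun a w h1 h2 => hPC a w h1 (hQ2C w h2)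
  have HP3 : ∀ (a : Fin 3) w, w ∈ (P a).support → w ∈ Q3.reverse.support → w = c a :=
    fun a w h1 h2 => hPC a w h1 (hQ3C w (hmem3 w h2))
  have binj : Function.Injective (mkB v (c 0) (c 1) (c 2)) := by
    intro i j hbij
    fin_cases i <;> fin_cases j <;>
      first
        | rfl
        | exact absurd hbij (hvc _)
        | exact absurd hbij (hvc _).symm
        | exact absurd hbij (hcc 0 1 (by decide))
        | exact absurd hbij (hcc 1 0 (by decide))
        | exact absurd hbij (hcc 0 2 (by decide))
        | exact absurd hbij (hcc 2 0 (by decide))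
        | exact absurd hbij (hcc 1 2 (by decide))
        | exact absurd hbij (hcc 2 1 (by decide))
  refine ⟨mkB v (c 0) (c 1) (c 2), binj,
    mk6 (P 0) (P 1) (P 2) Q1 Q3.reverse Q2, ?_, ?_, ?_⟩
  · intro i j hij
    fin_cases i <;> fin_cases j <;>
      first
        | exact absurd hij (by decide)
        | exact (hInd 0).1
        | exact (hInd 1).1
        | exact (hInd 2).1
        | exact hQ1p
        | exact hQ3p.reverse
        | exact hQ2p
  · intro i j hij k l hkl hne w hw1 hw2
    fin_cases i <;> fin_cases j <;> (try exact absurd hij (by decide)) <;>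
      fin_cases k <;> fin_cases l <;> (try exact absurd hkl (by decide)) <;>
      (try exact absurd rfl hne)
    -- (0,1) vs:
    · exact ⟨Or.inl (hShare 0 1 (by decide) w hw1 hw2), Or.inl (hShare 0 1 (by decide) w hw1 hw2)⟩
    · exact ⟨Or.inl (hShare 0 2 (by decide) w hw1 hw2), Or.inl (hShare 0 2 (by decide) w hw1 hw2)⟩
    · exact ⟨Or.inr (HP1 0 w hw1 hw2), Or.inl (HP1 0 w hw1 hw2)⟩
    · exact ⟨Or.inr (HP3 0 w hw1 hw2), Or.inl (HP3 0 w hw1 hw2)⟩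
    · exact absurd (by rwa [HP2 0 w hw1 hw2] at hw2) hc0Q2
    -- (0,2) vs:
    · exact ⟨Or.inl (hShare 1 0 (by decide) w hw1 hw2), Or.inl (hShare 1 0 (by decide) w hw1 hw2)⟩
    · exact ⟨Or.inl (hShare 1 2 (by decide) w hw1 hw2), Or.inl (hShare 1 2 (by decide) w hw1 hw2)⟩
    · exact ⟨Or.inr (HP1 1 w hw1 hw2), Or.inr (HP1 1 w hw1 hw2)⟩
    · exact absurd (by rwa [HP3 1 w hw1 hw2] at hw2) (fun h => hc1Q3 (hmem3 _ h))
    · exact ⟨Or.inr (HP2 1 w hw1 hw2), Or.inl (HP2 1 w hw1 hw2)⟩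
    -- (0,3) vs:
    · exact ⟨Or.inl (hShare 2 0 (by decide) w hw1 hw2), Or.inl (hShare 2 0 (by decide) w hw1 hw2)⟩
    · exact ⟨Or.inl (hShare 2 1 (by decide) w hw1 hw2), Or.inl (hShare 2 1 (by decide) w hw1 hw2)⟩
    · exact absurd (by rwa [HP1 2 w hw1 hw2] at hw2) hc2Q1
    · exact ⟨Or.inr (HP3 2 w hw1 hw2), Or.inr (HP3 2 w hw1 hw2)⟩
    · exact ⟨Or.inr (HP2 2 w hw1 hw2), Or.inr (HP2 2 w hw1 hw2)⟩
    -- (1,2) = Q1 vs: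
    · exact ⟨Or.inl (HP1 0 w hw2 hw1), Or.inr (HP1 0 w hw2 hw1)⟩
    · exact ⟨Or.inr (HP1 1 w hw2 hw1), Or.inr (HP1 1 w hw2 hw1)⟩
    · exact absurd (by rwa [HP1 2 w hw2 hw1] at hw1) hc2Q1
    · exact ⟨Or.inl (hQ13 w hw1 (hmem3 w hw2)), Or.inl (hQ13 w hw1 (hmem3 w hw2))⟩
    · exact ⟨Or.inr (hQ12 w hw1 hw2), Or.inl (hQ12 w hw1 hw2)⟩
    -- (1,3) = Q3.reverse vs:
    · exact ⟨Or.inl (HP3 0 w hw2 hw1), Or.inr (HP3 0 w hw2 hw1)⟩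
    · exact absurd (by rwa [HP3 1 w hw2 hw1] at hw1) (fun h => hc1Q3 (hmem3 _ h))
    · exact ⟨Or.inr (HP3 2 w hw2 hw1), Or.inr (HP3 2 w hw2 hw1)⟩
    · exact ⟨Or.inl (hQ13 w hw2 (hmem3 w hw1)), Or.inl (hQ13 w hw2 (hmem3 w hw1))⟩
    · exact ⟨Or.inr (hQ23 w hw2 (hmem3 w hw1)), Or.inr (hQ23 w hw2 (hmem3 w hw1))⟩
    -- (2,3) = Q2 vs:
    · exact absurd (by rwa [HP2 0 w hw2 hw1] at hw1) hc0Q2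
    · exact ⟨Or.inl (HP2 1 w hw2 hw1), Or.inr (HP2 1 w hw2 hw1)⟩
    · exact ⟨Or.inr (HP2 2 w hw2 hw1), Or.inr (HP2 2 w hw2 hw1)⟩
    · exact ⟨Or.inl (hQ12 w hw2 hw1), Or.inr (hQ12 w hw2 hw1)⟩
    · exact ⟨Or.inr (hQ23 w hw1 (hmem3 w hw2)), Or.inr (hQ23 w hw1 (hmem3 w hw2))⟩
  · -- inducedness
    have hclass : ∀ x, (∃ (i j : Fin 4) (hij : i < j),
        x ∈ (mk6 (b := mkB v (c 0) (c 1) (c 2)) (P 0) (P 1) (P 2) Q1 Q3.reverse Q2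
          i j hij).support) →
        x ∈ C ∨ ∃ t : Fin 3, x ∈ (P t).support ∧ x ∉ C := by
      rintro x ⟨i, j, hij, hx⟩
      by_cases hxC : x ∈ C
      · exact Or.inl hxC
      fin_cases i <;> fin_cases j <;> (try exact absurd hij (by decide))
      · exact Or.inr ⟨0, hx, hxC⟩
      · exact Or.inr ⟨1, hx, hxC⟩
      · exact Or.inr ⟨2, hx, hxC⟩
      · exact absurd (hQ1C x hx) hxC
      · exact absurd (hQ3C x (hmem3 x hx)) hxC
      · exact absurd (hQ2C x hx) hxC
    intro a a' ha ha' hadj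
    rcases hclass a ha with haC | ⟨i, hai, haC⟩ <;>
      rcases hclass a' ha' with ha'C | ⟨j, ha'j, ha'C⟩
    · rcases hCedge a a' haC ha'C hadj with h | h | h
      · exact ⟨1, 2, by decide, h⟩
      · exact ⟨2, 3, by decide, h⟩
      · exact ⟨1, 3, by decide, hedge3 _ h⟩
    · obtain ⟨t, ht⟩ := hNoEdge j a' ha'j ha'C a haC hadj.symm
      have ht' : s(a, a') ∈ (P t).edges := by rwa [Sym2.eq_swap]
      fin_cases t
      · exact ⟨0, 1, by decide, ht'⟩
      · exact ⟨0, 2, by decide, ht'⟩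
      · exact ⟨0, 3, by decide, ht'⟩
    · obtain ⟨t, ht⟩ := hNoEdge i a hai haC a' ha'C hadj
      fin_cases t
      · exact ⟨0, 1, by decide, ht⟩
      · exact ⟨0, 2, by decide, ht⟩
      · exact ⟨0, 3, by decide, ht⟩
    · by_cases hsame : a' ∈ (P i).support
      · have ht := (hInd i).2 a hai a' hsame hadj
        fin_cases i
        · exact ⟨0, 1, by decide, ht⟩
        · exact ⟨0, 2, by decide, ht⟩
        · exact ⟨0, 3, by decide, ht⟩
      · have hij : i ≠ j := fun h => hsame (h ▸ ha'j)
        rcases hCross i j hij a hai a' ha'j hadj with hav | hav | ⟨h1, h2⟩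
        · have hadj' : G.Adj v a' := hav ▸ hadj
          have ht' := (hInd j).2 v (Walk.start_mem_support _) a' ha'j hadj'
          have ht : s(a, a') ∈ (P j).edges := by rw [hav]; exact ht'
          fin_cases j
          · exact ⟨0, 1, by decide, ht⟩
          · exact ⟨0, 2, by decide, ht⟩
          · exact ⟨0, 3, by decide, ht⟩
        · have hadj' : G.Adj a v := hav ▸ hadj
          have ht' := (hInd i).2 a hai v (Walk.start_mem_support _) hadj'
          have ht : s(a, a') ∈ (P i).edges := by rw [hav]; exact ht'
          fin_cases i
          · exact ⟨0, 1, by decide, ht⟩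
          · exact ⟨0, 2, by decide, ht⟩
          · exact ⟨0, 3, by decide, ht⟩
        · exact absurd h1 haC

lemma assemble (C : Set V) (v : V) (c : Fin 3 → V)
    (P : ∀ i : Fin 3, G.Walk v (c i))
    (hvC : v ∉ C) (hcC : ∀ i, c i ∈ C) (hcInj : Function.Injective c)
    (hInd : ∀ i, IsInducedPath G (P i))
    (hPC : ∀ i w, w ∈ (P i).support → w ∈ C → w = c i)
    (hNoEdge : ∀ i, ∀ w ∈ (P i).support, w ∉ C → ∀ u ∈ C, G.Adj w u →
      ∃ j, s(w, u) ∈ (P j).edges)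
    (hShare : ∀ i j : Fin 3, i ≠ j → ∀ w, w ∈ (P i).support → w ∈ (P j).support → w = v)
    (hCross : ∀ i j : Fin 3, i ≠ j → ∀ a ∈ (P i).support, ∀ b ∈ (P j).support,
      G.Adj a b → a = v ∨ b = v ∨ (a ∈ C ∧ b ∈ C))
    (A1 : (G.induce C).Walk ⟨c 0, hcC 0⟩ ⟨c 1, hcC 1⟩)
    (A2 : (G.induce C).Walk ⟨c 1, hcC 1⟩ ⟨c 2, hcC 2⟩)
    (A3 : (G.induce C).Walk ⟨c 2, hcC 2⟩ ⟨c 0, hcC 0⟩)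
    (hA1p : A1.IsPath) (hA2p : A2.IsPath) (hA3p : A3.IsPath)
    (h12 : ∀ w, w ∈ A1.support → w ∈ A2.support → w = ⟨c 1, hcC 1⟩)
    (h23 : ∀ w, w ∈ A2.support → w ∈ A3.support → w = ⟨c 2, hcC 2⟩)
    (h13 : ∀ w, w ∈ A1.support → w ∈ A3.support → w = ⟨c 0, hcC 0⟩)
    (hn1 : (⟨c 2, hcC 2⟩ : ↥C) ∉ A1.support)
    (hn2 : (⟨c 0, hcC 0⟩ : ↥C) ∉ A2.support)
    (hn3 : (⟨c 1, hcC 1⟩ : ↥C) ∉ A3.support)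
    (hCedge' : ∀ a b : ↥C, (G.induce C).Adj a b →
      s(a, b) ∈ A1.edges ∨ s(a, b) ∈ A2.edges ∨ s(a, b) ∈ A3.edges) :
    HasInducedK4Subdivision G := by
  have hinj : Function.Injective ((SimpleGraph.Embedding.induce (G := G) C).toHom) :=
    Subtype.val_injective
  set ι := (SimpleGraph.Embedding.induce (G := G) C).toHom with hι
  have hsupp : ∀ {x y : ↥C} (A : (G.induce C).Walk x y) (w : V),
      w ∈ (A.map ι).support → ∃ z, z ∈ A.support ∧ z.1 = w := by
    intro x y A w hw
    rw [Walk.support_map] at hw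
    obtain ⟨z, hz, hzval⟩ := List.mem_map.mp hw
    exact ⟨z, hz, hzval⟩
  have hsuppC : ∀ {x y : ↥C} (A : (G.induce C).Walk x y), ∀ w ∈ (A.map ι).support, w ∈ C := by
    intro x y A w hw
    obtain ⟨z, _, rfl⟩ := hsupp A w hw
    exact z.2
  have hint : ∀ {x1 y1 x2 y2 : ↥C} (Aa : (G.induce C).Walk x1 y1)
      (Ab : (G.induce C).Walk x2 y2) (z' : ↥C),
      (∀ w, w ∈ Aa.support → w ∈ Ab.support → w = z') →
      ∀ w, w ∈ (Aa.map ι).support → w ∈ (Ab.map ι).support → w = z'.1 := by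
    intro x1 y1 x2 y2 Aa Ab z' hz' w hw1 hw2
    obtain ⟨za, hza, hzaval⟩ := hsupp Aa w hw1
    obtain ⟨zb, hzb, hzbval⟩ := hsupp Ab w hw2
    have : za = zb := Subtype.val_injective (hzaval.trans hzbval.symm)
    rw [← hzaval]
    exact congrArg Subtype.val (hz' za hza (this ▸ hzb))
  have hnot : ∀ {x y : ↥C} (A : (G.induce C).Walk x y) (z' : ↥C),
      z' ∉ A.support → z'.1 ∉ (A.map ι).support := by
    intro x y A z' hz' hmem
    obtain ⟨za, hza, hzaval⟩ := hsupp A z'.1 hmem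
    exact hz' ((Subtype.val_injective hzaval : za = z') ▸ hza)
  refine build_ISK4 G C v c P (A1.map ι) (A2.map ι) (A3.map ι)
    hvC hcC hcInj hInd hPC hNoEdge hShare hCross
    (Walk.map_isPath_of_injective hinj hA1p)
    (Walk.map_isPath_of_injective hinj hA2p)
    (Walk.map_isPath_of_injective hinj hA3p)
    (hsuppC A1) (hsuppC A2) (hsuppC A3)
    (hint A1 A2 _ h12) (hint A2 A3 _ h23) (hint A1 A3 _ h13)
    (hnot A1 _ hn1) (hnot A2 _ hn2) (hnot A3 _ hn3) ?_
  intro a b ha hb hadj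
  have hadjW : (G.induce C).Adj ⟨a, ha⟩ ⟨b, hb⟩ := hadj
  have hmape : ∀ {x y : ↥C} (A : (G.induce C).Walk x y),
      s(⟨a, ha⟩, (⟨b, hb⟩ : ↥C)) ∈ A.edges → s(a, b) ∈ (A.map ι).edges := by
    intro x y A hmem
    rw [Walk.edges_map]
    exact List.mem_map.mpr ⟨s(⟨a, ha⟩, ⟨b, hb⟩), hmem, rfl⟩
  rcases hCedge' ⟨a, ha⟩ ⟨b, hb⟩ hadjW with h | h | h
  · exact Or.inl (hmape A1 h)
  · exact Or.inr (Or.inl (hmape A2 h))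
  · exact Or.inr (Or.inr (hmape A3 h))



end Build
end AuxBuildForNoVertexLinked

/-- In an ISK4-free graph, no vertex can be linked to a hole. -/
theorem no_vertex_linked_to_hole {V : Type*} [Fintype V] (G : SimpleGraph V)
    (hI : ISK4Free G) :
    ¬ ∃ (C : Set V) (v : V) (c : Fin 3 → V) (P : ∀ i, G.Walk v (c i)),
      IsHole G C ∧ v ∉ C ∧ (∀ i, c i ∈ C) ∧
      (∀ i, IsInducedPath G (P i)) ∧
      -- the interiors of the paths, together with `v`, are disjoint from `C`
      (∀ i, ∀ w ∈ (P i).support, w ≠ v → w ≠ c i → w ∉ C) ∧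
      -- there are no edges between the paths and `C` other than the edges of the paths
      (∀ i, ∀ w ∈ (P i).support, w ∉ C → ∀ u ∈ C, G.Adj w u →
        ∃ j, s(w, u) ∈ (P j).edges) ∧
      -- distinct paths share only the vertex `v`
      (∀ i j, i ≠ j → ∀ w, w ∈ (P i).support → w ∈ (P j).support → w = v) ∧
      -- an edge between two distinct paths involves `v` or has both ends in `C`
      (∀ i j, i ≠ j → ∀ a ∈ (P i).support, ∀ b ∈ (P j).support,
        G.Adj a b → a = v ∨ b = v ∨ (a ∈ C ∧ b ∈ C)) ∧
      -- every neighbor of `v` in `C` lies on one of the paths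
      (∀ u ∈ C, G.Adj v u → ∃ i, u ∈ (P i).support) := by
  rintro ⟨C, v, c, P, hHole, hvC, hcC, hInd, hIntC, hNoEdgeH, hShare, hCross, hNbr⟩
  obtain ⟨⟨hFin, h3, hConn, hDeg⟩, h4⟩ := hHole
  apply hI
  classical
  haveI : Fintype ↥C := hFin.fintype
  haveI : Nonempty ↥C := ⟨⟨c 0, hcC 0⟩⟩
  have hcInj : Function.Injective c := by
    intro i j hij
    by_contra hne
    have h1 : c i ∈ (P i).support := Walk.end_mem_support _
    have h2 : c i ∈ (P j).support := by rw [hij]; exact Walk.end_mem_support _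
    exact hvC (hShare i j hne (c i) h1 h2 ▸ hcC i)
  have hPC : ∀ i w, w ∈ (P i).support → w ∈ C → w = c i := by
    intro i w hw hwC
    by_cases h1 : w = v
    · exact absurd (h1 ▸ hwC) hvC
    by_cases h2 : w = c i
    · exact h2
    · exact absurd hwC (hIntC i w hw h1 h2)
  have hdegW : ∀ x : ↥C, ((G.induce C).neighborSet x).ncard = 2 := by
    intro x
    have himg : Subtype.val '' ((G.induce C).neighborSet x) = G.neighborSet x.1 ∩ C := by
      ext b
      constructor
      · rintro ⟨y, hy, rfl⟩
        exact ⟨hy, y.2⟩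
      · rintro ⟨hb1, hb2⟩
        exact ⟨⟨b, hb2⟩, hb1, rfl⟩
    have := Set.ncard_image_of_injective ((G.induce C).neighborSet x) Subtype.val_injective
    rw [himg] at this
    rw [← this]
    exact hDeg x.1 x.2
  obtain ⟨z, wcyc, hcyc, hspan⟩ := exists_spanning_cycle hConn hdegW
  have hz0m : (⟨c 0, hcC 0⟩ : ↥C) ∈ wcyc.support := hspan _
  set q := wcyc.rotate _ hz0m with hq
  have hqcyc : q.IsCycle := hcyc.rotate hz0m
  have hqspan : ∀ u : ↥C, u ∈ q.support := by
    intro u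
    have h1 : u ∈ wcyc.support.tail := closed_walk_mem_tail wcyc hcyc.not_nil (hspan u)
    have h2 : u ∈ q.support.tail := (Walk.support_rotate wcyc _ hz0m).mem_iff.mpr h1
    rw [q.support_eq_cons]
    exact List.mem_cons_of_mem _ h2
  have hzne : ∀ i j : Fin 3, i ≠ j →
      (⟨c i, hcC i⟩ : ↥C) ≠ ⟨c j, hcC j⟩ := by
    intro i j hij h
    exact hij (hcInj (congrArg Subtype.val h))
  have hqedge : ∀ a b : ↥C, (G.induce C).Adj a b → s(a, b) ∈ q.edges :=
    fun a b hab => cycle_edge_of_adj q hqcyc a (hqspan a) (hdegW a) (Set.toFinite _) hab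
  have hz1 : (⟨c 1, hcC 1⟩ : ↥C) ∈ q.support := hqspan _
  have hz2cases : (⟨c 2, hcC 2⟩ : ↥C) ∈ (q.takeUntil _ hz1).support ∨
      (⟨c 2, hcC 2⟩ : ↥C) ∈ (q.dropUntil _ hz1).support := by
    rw [← Walk.mem_support_append_iff, Walk.take_spec]
    exact hqspan _
  rcases hz2cases with hA | hR
  · -- c 2 appears before c 1 on the cycle: order (c 0, c 2, c 1)
    set B1 := (q.takeUntil _ hz1).takeUntil _ hA with hB1
    set B2 := (q.takeUntil _ hz1).dropUntil _ hA with hB2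
    set B3 := q.dropUntil _ hz1 with hB3
    have heq : B1.append (B2.append B3) = q := by
      rw [Walk.append_assoc, Walk.take_spec, Walk.take_spec]
    obtain ⟨hp1, hp2, hp3, i12, i23, i13, n1, n2, n3⟩ :=
      cycle_three_split B1 B2 B3 (by rw [heq]; exact hqcyc)
        (hzne 0 2 (by decide)) (hzne 0 1 (by decide)) (hzne 2 1 (by decide))
    have hedges : ∀ a b : ↥C, (G.induce C).Adj a b →
        s(a, b) ∈ B1.edges ∨ s(a, b) ∈ B2.edges ∨ s(a, b) ∈ B3.edges := by
      intro a b hab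
      have := hqedge a b hab
      rw [← heq, Walk.edges_append, Walk.edges_append] at this
      rcases List.mem_append.mp this with h | h
      · exact Or.inl h
      · rcases List.mem_append.mp h with h' | h'
        · exact Or.inr (Or.inl h')
        · exact Or.inr (Or.inr h')
    -- swapped order
    have hswapInj : Function.Injective (![0, 2, 1] : Fin 3 → Fin 3) := by decide
    have hswapsq : ∀ t : Fin 3, (![0, 2, 1] : Fin 3 → Fin 3) (![0, 2, 1] t) = t := by decide
    exact assemble G C v (fun i => c (![0, 2, 1] i)) (fun i => P (![0, 2, 1] i))
      hvC (fun i => hcC _) (fun i j hij => hcInj.comp hswapInj hij)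
      (fun i => hInd _) (fun i w => hPC _ w)
      (fun i w hw hwC u huC hadj => by
        obtain ⟨j0, hj0⟩ := hNoEdgeH _ w hw hwC u huC hadj
        refine ⟨![0, 2, 1] j0, ?_⟩
        show s(w, u) ∈ (P ((![0, 2, 1] : Fin 3 → Fin 3) ((![0, 2, 1] : Fin 3 → Fin 3) j0))).edges
        rw [hswapsq j0]
        exact hj0)
      (fun i j hij => hShare _ _ (fun h => hij (hswapInj h)))
      (fun i j hij => hCross _ _ (fun h => hij (hswapInj h)))
      B1 B2 B3 hp1 hp2 hp3 i12 i23 i13 n1 n2 n3 hedges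
  · -- c 1 comes first: order (c 0, c 1, c 2)
    set A1 := q.takeUntil _ hz1 with hA1
    set A2 := (q.dropUntil _ hz1).takeUntil _ hR with hA2
    set A3 := (q.dropUntil _ hz1).dropUntil _ hR with hA3
    have heq : A1.append (A2.append A3) = q := by
      rw [Walk.take_spec, Walk.take_spec]
    obtain ⟨hp1, hp2, hp3, i12, i23, i13, n1, n2, n3⟩ :=
      cycle_three_split A1 A2 A3 (by rw [heq]; exact hqcyc)
        (hzne 0 1 (by decide)) (hzne 0 2 (by decide)) (hzne 1 2 (by decide))
    have hedges : ∀ a b : ↥C, (G.induce C).Adj a b →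
        s(a, b) ∈ A1.edges ∨ s(a, b) ∈ A2.edges ∨ s(a, b) ∈ A3.edges := by
      intro a b hab
      have := hqedge a b hab
      rw [← heq, Walk.edges_append, Walk.edges_append] at this
      rcases List.mem_append.mp this with h | h
      · exact Or.inl h
      · rcases List.mem_append.mp h with h' | h'
        · exact Or.inr (Or.inl h')
        · exact Or.inr (Or.inr h')
    exact assemble G C v c P hvC hcC hcInj hInd hPC hNoEdgeH hShare hCross
      A1 A2 A3 hp1 hp2 hp3 i12 i23 i13 n1 n2 n3 hedges
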